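/- Let q be a prime power and u a divisor of q−1. For every w ∈ F_q^*, the expression θ(u)·∑_{d|u} (μ(d)/φ(d))·∑_{χ_d} χ_d(w), where θ(u) = φ(u)/u, the inner sum runs over all multiplicative characters χ_d of F_q of exact order d, μ is the Möbius function and φ is Euler's totient function, equals 1 if w is u-free and equals 0 otherwise. -/

import Mathlib

/-- A primitive element of a finite field: a generator of the cyclic group of
nonzero elements, i.e. an element of multiplicative order `q - 1`. -/
def IsPrimitiveElt {F : Type*} [Field F] [Fintype F] (α : F) : Prop :=
  orderOf α = Fintype.card F - 1

/-- The degree of a rational function `f = f₁/f₂` in lowest terms is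
`deg f₁ + deg f₂`. -/
noncomputable def ratFuncDeg {F : Type*} [Field F] (f : RatFunc F) : ℕ :=
  f.num.natDegree + f.denom.natDegree

/-- A rational function `f` over `F_q` is exceptional if `f = c · x^j · g^d`
for some `c ∈ F_q^*`, some integer `j`, some rational function `g`, and some
divisor `d > 1` of `q - 1`. -/
def IsExceptionalRatFunc (F : Type*) [Field F] [Fintype F] (f : RatFunc F) : Prop :=
  ∃ (c : F) (j : ℤ) (g : RatFunc F) (d : ℕ), c ≠ 0 ∧ 1 < d ∧
    d ∣ (Fintype.card F - 1) ∧ f = RatFunc.C c * RatFunc.X ^ j * g ^ d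

/-- `W m` is the number of squarefree divisors of `m`, i.e. `2 ^ ω(m)`. -/
def W (m : ℕ) : ℕ := 2 ^ m.primeFactors.card


/-- For `e ∣ q - 1`, an element `w ∈ F_q^*` is `e`-free if `w = v^d` with
`v ∈ F_q` and `d ∣ e` implies `d = 1`. -/
def IsEFree {F : Type*} [Field F] (e : ℕ) (w : F) : Prop :=
  ∀ (v : F) (d : ℕ), d ∣ e → w = v ^ d → d = 1

noncomputable instance {F : Type*} [Field F] [Fintype F] : Fintype (MulChar F ℂ) :=
  Fintype.ofFinite _

open Finset ArithmeticFunction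

section CharAux

variable {F : Type*} [Field F] [Fintype F]

private lemma hasEnoughAux (G : Type*) [CommGroup G] [Finite G] :
    HasEnoughRootsOfUnity ℂ (Monoid.exponent G) := by
  have : NeZero ((Monoid.exponent G : ℂ)) :=
    ⟨by exact_mod_cast Monoid.exponent_ne_zero_of_finite⟩
  infer_instance

private lemma mulCharIso : Nonempty (MulChar F ℂ ≃* Fˣ) := by
  have := hasEnoughAux Fˣ
  exact MulChar.mulEquiv_units F ℂ

private lemma cardMulChar : Fintype.card (MulChar F ℂ) = Fintype.card F - 1 := by
  classical
  rw [Fintype.card_congr (mulCharIso (F := F)).some.toEquiv, Fintype.card_units]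

private lemma isCyclicMulChar : IsCyclic (MulChar F ℂ) := by
  obtain ⟨e⟩ := mulCharIso (F := F)
  exact isCyclic_of_surjective e.symm e.symm.surjective

open Classical in
private lemma card_orderEq (d : ℕ) (hd : d ∣ Fintype.card F - 1) :
    (univ.filter fun χ : MulChar F ℂ => orderOf χ = d).card = d.totient := by
  have := isCyclicMulChar (F := F)
  have h : d ∣ Fintype.card (MulChar F ℂ) := by rw [cardMulChar]; exact hd
  simpa using IsCyclic.card_orderOf_eq_totient (α := MulChar F ℂ) h

variable {F : Type*} [Field F] [Fintype F]

private lemma forall_char_eq_one_iff (w : Fˣ) (d : ℕ) (hd : d ≠ 0) :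
    (∀ χ : MulChar F ℂ, χ ^ d = 1 → χ (w : F) = 1) ↔ ∃ v : Fˣ, v ^ d = w := by
  constructor
  · intro h
    by_contra hc
    set K := (powMonoidHom d : Fˣ →* Fˣ).range with hK
    have hwK : w ∉ K := by
      rintro ⟨v, hv⟩
      exact hc ⟨v, hv⟩
    have hw1 : ((w : Fˣ ⧸ K)) ≠ 1 := by
      simpa [QuotientGroup.eq_one_iff] using hwK
    have := hasEnoughAux (Fˣ ⧸ K)
    obtain ⟨φ, hφ⟩ :=
      CommGroup.exists_apply_ne_one_of_hasEnoughRootsOfUnity (Fˣ ⧸ K) ℂ hw1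
    set ψ : Fˣ →* ℂˣ := φ.comp (QuotientGroup.mk' K) with hψ
    set χ : MulChar F ℂ := MulChar.mulEquivToUnitHom.symm ψ with hχ
    have hψd : ψ ^ d = 1 := by
      ext x
      have hx : (x : Fˣ) ^ d ∈ K := ⟨x, rfl⟩
      have : ψ (x ^ d) = 1 := by
        rw [hψ]
        simp only [MonoidHom.comp_apply, QuotientGroup.mk'_apply]
        rw [(QuotientGroup.eq_one_iff _).mpr hx, map_one]
      have h2 : ψ x ^ d = 1 := by rw [← map_pow]; exact this
      simpa using congrArg Units.val h2
    have hχd : χ ^ d = 1 := by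
      rw [hχ, ← map_pow, hψd, map_one]
    have hχw : χ (w : F) = ψ w := by
      rw [hχ]
      have : MulChar.mulEquivToUnitHom.symm ψ = MulChar.equivToUnitHom.symm ψ := rfl
      rw [this, MulChar.equivToUnitHom_symm_coe]
    apply hφ
    have h3 : ((ψ w : ℂˣ) : ℂ) = 1 := by rw [← hχw]; exact h χ hχd
    have h4 : ψ w = 1 := Units.ext (by simpa using h3)
    simpa [hψ] using h4
  · rintro ⟨v, rfl⟩ χ hχ
    have h1 : (χ ^ d) ((v : F)) = 1 := by
      rw [hχ]
      exact MulChar.one_apply_coe v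
    rw [MulChar.pow_apply' χ hd] at h1
    push_cast
    rw [map_pow]
    exact h1

open Classical in
private lemma sum_orderDvd (w : Fˣ) {d : ℕ} (hd : d ∣ Fintype.card F - 1) (hd0 : d ≠ 0) :
    ∑ χ ∈ univ.filter (fun χ : MulChar F ℂ => orderOf χ ∣ d), χ (w : F)
      = if ∃ v : Fˣ, v ^ d = w then (d : ℂ) else 0 := by
  split_ifs with h
  · have hone : ∀ χ ∈ univ.filter (fun χ : MulChar F ℂ => orderOf χ ∣ d), χ (w:F) = 1 := by
      intro χ hχ
      rw [mem_filter] at hχ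
      exact (forall_char_eq_one_iff w d hd0).mpr h χ (orderOf_dvd_iff_pow_eq_one.mp hχ.2)
    rw [Finset.sum_congr rfl hone, Finset.sum_const, nsmul_eq_mul, mul_one]
    norm_cast
    rw [Finset.card_eq_sum_card_fiberwise (f := fun χ : MulChar F ℂ => orderOf χ)
      (t := d.divisors) (fun χ hχ => Nat.mem_divisors.mpr ⟨(mem_filter.mp hχ).2, hd0⟩)]
    have key : ∀ e ∈ d.divisors,
        ((univ.filter (fun χ : MulChar F ℂ => orderOf χ ∣ d)).filter
          (fun χ => orderOf χ = e)).card = e.totient := by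
      intro e he
      rw [Finset.filter_filter]
      have heq : (univ.filter fun χ : MulChar F ℂ => orderOf χ ∣ d ∧ orderOf χ = e)
          = univ.filter fun χ : MulChar F ℂ => orderOf χ = e := by
        apply Finset.filter_congr
        intro χ _
        constructor
        · exact fun h' => h'.2
        · exact fun h' => ⟨h' ▸ (Nat.mem_divisors.mp he).1, h'⟩
      rw [heq, card_orderEq e ((Nat.mem_divisors.mp he).1.trans hd)]
    rw [Finset.sum_congr rfl key, Nat.sum_totient]
  · have hex : ¬ ∀ χ : MulChar F ℂ, χ ^ d = 1 → χ (w:F) = 1 := by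
      intro hall; exact h ((forall_char_eq_one_iff w d hd0).mp hall)
    push_neg at hex
    obtain ⟨χ₀, hχ₀d, hχ₀⟩ := hex
    refine eq_zero_of_mul_eq_self_left hχ₀ ?_
    rw [Finset.mul_sum]
    simp_rw [← MulChar.mul_apply]
    refine Finset.sum_nbij' (fun χ => χ₀ * χ) (fun χ => χ₀⁻¹ * χ) ?_ ?_ ?_ ?_ ?_
    · intro χ hχ
      rw [mem_filter] at hχ ⊢
      refine ⟨mem_univ _, orderOf_dvd_iff_pow_eq_one.mpr ?_⟩
      rw [mul_pow, hχ₀d, one_mul]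
      exact orderOf_dvd_iff_pow_eq_one.mp hχ.2
    · intro χ hχ
      rw [mem_filter] at hχ ⊢
      refine ⟨mem_univ _, orderOf_dvd_iff_pow_eq_one.mpr ?_⟩
      rw [mul_pow, inv_pow, hχ₀d, inv_one, one_mul]
      exact orderOf_dvd_iff_pow_eq_one.mp hχ.2
    · intro χ _; simp [← mul_assoc]
    · intro χ _; simp [← mul_assoc]
    · intro χ _; rfl

end CharAux


section Arith

variable {G : Type*} [CommGroup G]

private lemma pow_exists_mul {w : G} {m n : ℕ} (hmn : Nat.Coprime m n) :
    (∃ v : G, v ^ (m * n) = w) ↔ (∃ v : G, v ^ m = w) ∧ (∃ v : G, v ^ n = w) := by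
  constructor
  · rintro ⟨v, rfl⟩
    exact ⟨⟨v ^ n, by rw [← pow_mul, mul_comm]⟩, ⟨v ^ m, by rw [← pow_mul]⟩⟩
  · rintro ⟨⟨x, hx⟩, ⟨y, hy⟩⟩
    have hab : (m : ℤ) * m.gcdA n + (n : ℤ) * m.gcdB n = 1 := by
      have h := Nat.gcd_eq_gcd_ab m n
      rw [hmn] at h
      exact_mod_cast h.symm
    set a := m.gcdA n
    set b := m.gcdB n
    refine ⟨y ^ a * x ^ b, ?_⟩
    have hxz : x ^ (m : ℤ) = w := by rw [zpow_natCast, hx]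
    have hyz : y ^ (n : ℤ) = w := by rw [zpow_natCast, hy]
    calc (y ^ a * x ^ b) ^ (m * n)
        = (y ^ a * x ^ b) ^ ((m : ℤ) * n) := by rw [← zpow_natCast]; norm_cast
      _ = (y ^ ((n : ℤ))) ^ ((m : ℤ) * a) * (x ^ ((m : ℤ))) ^ ((n : ℤ) * b) := by
          rw [mul_zpow, ← zpow_mul, ← zpow_mul, ← zpow_mul, ← zpow_mul]
          congr 1 <;> [skip; skip] <;> congr 1 <;> ring
      _ = w ^ ((m : ℤ) * a) * w ^ ((n : ℤ) * b) := by rw [hxz, hyz]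
      _ = w ^ ((m : ℤ) * a + (n : ℤ) * b) := (zpow_add w _ _).symm
      _ = w := by rw [hab, zpow_one]

open Classical in
private noncomputable def Gfun (w : G) : ArithmeticFunction ℂ :=
  ⟨fun e => if ∃ v : G, v ^ e = w then (e : ℂ) else 0, by simp⟩

open Classical in
private lemma Gfun_apply (w : G) (e : ℕ) :
    Gfun w e = if ∃ v : G, v ^ e = w then (e : ℂ) else 0 := rfl

private lemma isMult_Gfun (w : G) : (Gfun w).IsMultiplicative := by
  classical
  constructor
  · rw [Gfun_apply, if_pos ⟨w, pow_one w⟩]; norm_num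
  · intro m n hmn
    rw [Gfun_apply, Gfun_apply, Gfun_apply, pow_exists_mul hmn]
    by_cases h1 : ∃ v : G, v ^ m = w <;> by_cases h2 : ∃ v : G, v ^ n = w <;>
      simp [h1, h2]

private noncomputable def Phi : ArithmeticFunction ℂ :=
  ⟨fun n => (n.totient : ℂ), by simp⟩

private lemma Phi_apply (n : ℕ) : Phi n = (n.totient : ℂ) := rfl

private lemma isMult_Phi : Phi.IsMultiplicative := by
  constructor
  · rw [Phi_apply]; norm_num
  · intro m n hmn
    rw [Phi_apply, Phi_apply, Phi_apply, Nat.totient_mul hmn]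
    push_cast; ring

private noncomputable def cfun (w : G) : ArithmeticFunction ℂ :=
  ((ArithmeticFunction.moebius : ArithmeticFunction ℤ) : ArithmeticFunction ℂ) * Gfun w

private noncomputable def hfun (w : G) : ArithmeticFunction ℂ :=
  (ArithmeticFunction.pdiv
      ((ArithmeticFunction.moebius : ArithmeticFunction ℤ) : ArithmeticFunction ℂ) Phi).pmul
    (cfun w)

private lemma isMult_cfun (w : G) : (cfun w).IsMultiplicative :=
  isMultiplicative_moebius.intCast.mul (isMult_Gfun w)

private lemma isMult_hfun (w : G) : (hfun w).IsMultiplicative :=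
  (isMultiplicative_moebius.intCast.pdiv isMult_Phi).pmul (isMult_cfun w)

private lemma hfun_apply (w : G) (d : ℕ) :
    hfun w d = ((ArithmeticFunction.moebius d : ℤ) : ℂ) / (d.totient : ℂ) * cfun w d := by
  simp [hfun, ArithmeticFunction.pmul_apply, ArithmeticFunction.pdiv_apply,
    ArithmeticFunction.intCoe_apply, Phi_apply]

private lemma cfun_eq_sum (w : G) (d : ℕ) :
    cfun w d = ∑ e ∈ d.divisors, ((ArithmeticFunction.moebius (d / e) : ℤ) : ℂ) * Gfun w e := by
  rw [cfun, ArithmeticFunction.mul_apply, ← Nat.sum_divisorsAntidiagonal'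
    (f := fun i j => ((ArithmeticFunction.moebius i : ℤ) : ℂ) * Gfun w j)]
  exact Finset.sum_congr rfl fun p _ => by rw [ArithmeticFunction.intCoe_apply]

open Classical in
private lemma hfun_prime (w : G) {p : ℕ} (hp : p.Prime) :
    hfun w p = (-1) / ((p : ℂ) - 1) * ((if ∃ v : G, v ^ p = w then (p : ℂ) else 0) - 1) := by
  rw [hfun_apply, cfun_eq_sum]
  rw [show p.divisors = {1, p} from Nat.Prime.divisors hp]
  rw [Finset.sum_pair hp.one_lt.ne]
  rw [Nat.div_one, Nat.div_self hp.pos, ArithmeticFunction.moebius_apply_one,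
    ArithmeticFunction.moebius_apply_prime hp]
  rw [Gfun_apply, Gfun_apply, if_pos ⟨w, pow_one w⟩, Nat.totient_prime hp]
  push_cast [Nat.cast_sub hp.one_le]
  ring

open Classical in
private lemma factor_eval (w : G) {p k : ℕ} (hp : p.Prime) (hk : k ≠ 0) :
    (((p ^ k).totient : ℂ) / ((p : ℂ) ^ k)) * ∑ d ∈ (p ^ k).divisors, hfun w d
      = if ∃ v : G, v ^ p = w then 0 else 1 := by
  have hp0 : (p : ℂ) ≠ 0 := Nat.cast_ne_zero.mpr hp.pos.ne'
  have hp1 : (p : ℂ) - 1 ≠ 0 := by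
    refine sub_ne_zero.mpr ?_
    exact_mod_cast hp.one_lt.ne'
  have hsum : ∑ d ∈ (p ^ k).divisors, hfun w d = 1 + hfun w p := by
    rw [Nat.sum_divisors_prime_pow hp]
    have hsub : ({0, 1} : Finset ℕ) ⊆ Finset.range (k + 1) := by
      intro i hi
      rcases Finset.mem_insert.mp hi with rfl | hi
      · exact Finset.mem_range.mpr (Nat.succ_pos k)
      · rw [Finset.mem_singleton] at hi
        subst hi
        exact Finset.mem_range.mpr (Nat.lt_succ_of_le (Nat.one_le_iff_ne_zero.mpr hk))
    rw [← Finset.sum_subset hsub ?zero]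
    case zero =>
      intro i _ hi
      simp only [Finset.mem_insert, Finset.mem_singleton, not_or] at hi
      rw [hfun_apply]
      rw [ArithmeticFunction.moebius_apply_prime_pow hp hi.1, if_neg hi.2]
      simp
    rw [Finset.sum_pair (by norm_num : (0:ℕ) ≠ 1), pow_zero, pow_one,
      (isMult_hfun w).1]
  rw [hsum, hfun_prime w hp]
  split_ifs with hP
  · have : (1 : ℂ) + (-1) / ((p : ℂ) - 1) * ((p : ℂ) - 1) = 0 := by field_simp; norm_num
    rw [this, mul_zero]
  · rw [Nat.totient_prime_pow hp (Nat.pos_of_ne_zero hk)]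
    push_cast [Nat.cast_sub hp.one_le]
    have hpk : (p : ℂ) ^ k = (p : ℂ) ^ (k - 1) * p := by
      rw [← pow_succ, Nat.sub_add_cancel (Nat.one_le_iff_ne_zero.mpr hk)]
    rw [hpk]
    field_simp
    ring

open Classical in
private lemma arith_eval (w : G) {u : ℕ} (hu : u ≠ 0) :
    ((u.totient : ℂ) / u) * ∑ d ∈ u.divisors, hfun w d
      = if ∀ p ∈ u.primeFactors, ¬ ∃ v : G, v ^ p = w then 1 else 0 := by
  set Tf : ArithmeticFunction ℂ :=
    hfun w * ((ArithmeticFunction.zeta : ArithmeticFunction ℕ) : ArithmeticFunction ℂ) with hTf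
  set Θf : ArithmeticFunction ℂ :=
    ArithmeticFunction.pdiv Phi ((ArithmeticFunction.id : ArithmeticFunction ℕ) :
      ArithmeticFunction ℂ) with hΘf
  have hTmul : Tf.IsMultiplicative := (isMult_hfun w).mul isMultiplicative_zeta.natCast
  have hΘmul : Θf.IsMultiplicative := isMult_Phi.pdiv isMultiplicative_id.natCast
  have hTapp : ∀ m : ℕ, Tf m = ∑ d ∈ m.divisors, hfun w d := fun m => by
    rw [hTf, ArithmeticFunction.coe_mul_zeta_apply]
  have hΘapp : ∀ m : ℕ, Θf m = ((m.totient : ℂ) / m) := fun m => by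
    rw [hΘf, ArithmeticFunction.pdiv_apply, Phi_apply, ArithmeticFunction.natCoe_apply,
      ArithmeticFunction.id_apply]
  rw [← hTapp, ← hΘapp]
  rw [hΘmul.multiplicative_factorization _ hu, hTmul.multiplicative_factorization _ hu]
  rw [Finsupp.prod, Finsupp.prod, ← Finset.prod_mul_distrib]
  have hsupp : u.factorization.support = u.primeFactors := Nat.support_factorization u
  have hfac : ∀ p ∈ u.primeFactors,
      Θf (p ^ u.factorization p) * Tf (p ^ u.factorization p)
        = if ∃ v : G, v ^ p = w then 0 else 1 := by
    intro p hp'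
    have hpp := Nat.prime_of_mem_primeFactors hp'
    have hkne : u.factorization p ≠ 0 := by
      rw [← hsupp] at hp'
      exact Finsupp.mem_support_iff.mp hp'
    rw [hTapp, hΘapp, Nat.cast_pow]
    exact factor_eval w hpp hkne
  rw [hsupp]
  by_cases hall : ∀ p ∈ u.primeFactors, ¬∃ v : G, v ^ p = w
  · rw [if_pos hall,
      Finset.prod_congr rfl (fun p hp' => by rw [hfac p hp', if_neg (hall p hp')]),
      Finset.prod_const_one]
  · rw [if_neg hall]
    push_neg at hall
    obtain ⟨p, hp', hv⟩ := hall
    refine Finset.prod_eq_zero hp' ?_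
    rw [hfac p hp', if_pos hv]


end Arith

section Link

variable {F : Type*} [Field F] [Fintype F]

private lemma filter_filter_order (m e : ℕ) (he : e ∣ m) :
    (Finset.univ.filter (fun χ : MulChar F ℂ => orderOf χ ∣ m)).filter
        (fun χ => orderOf χ = e)
      = Finset.univ.filter (fun χ : MulChar F ℂ => orderOf χ = e) := by
  rw [Finset.filter_filter]
  apply Finset.filter_congr
  intro χ _
  constructor
  · exact fun h' => h'.2
  · exact fun h' => ⟨h' ▸ he, h'⟩

open Classical in
private lemma charSum_eq_cfun (w : Fˣ) {d : ℕ} (hd : d ∣ Fintype.card F - 1) (hd0 : d ≠ 0) :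
    ∑ χ ∈ Finset.univ.filter (fun χ : MulChar F ℂ => orderOf χ = d), χ (w : F)
      = cfun w d := by
  have hforward : ∀ m > 0, m ∈ {m | m ∣ Fintype.card F - 1} →
      (∑ e ∈ m.divisors,
        ∑ χ ∈ Finset.univ.filter (fun χ : MulChar F ℂ => orderOf χ = e), χ (w : F))
      = (if ∃ v : Fˣ, v ^ m = w then (m : ℂ) else 0) := by
    intro m hm hms
    rw [← sum_orderDvd w hms hm.ne']
    rw [← Finset.sum_fiberwise_of_maps_to (g := fun χ : MulChar F ℂ => orderOf χ)
      (t := m.divisors)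
      (fun χ hχ => Nat.mem_divisors.mpr ⟨(Finset.mem_filter.mp hχ).2, hm.ne'⟩)]
    exact Finset.sum_congr rfl fun e he => by
      rw [filter_filter_order m e (Nat.dvd_of_mem_divisors he)]
  have key := (ArithmeticFunction.sum_eq_iff_sum_mul_moebius_eq_on
    (f := fun e => ∑ χ ∈ Finset.univ.filter (fun χ : MulChar F ℂ => orderOf χ = e), χ (w : F))
    (g := fun e => if ∃ v : Fˣ, v ^ e = w then (e : ℂ) else 0)
    {m | m ∣ Fintype.card F - 1} (fun i j hij hj => hij.trans hj)).mp
    hforward d (Nat.pos_of_ne_zero hd0) hd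
  rw [← key, cfun_eq_sum, ← Nat.sum_divisorsAntidiagonal'
    (f := fun i j => ((ArithmeticFunction.moebius i : ℤ) : ℂ) * Gfun w j)]
  refine Finset.sum_congr rfl fun x _ => ?_
  rw [Gfun_apply]
  exact congrArg _ (by convert rfl)

private lemma efree_iff {u : ℕ} (hu0 : u ≠ 0) (w : F) (hw : w ≠ 0) :
    IsEFree u w ↔ ∀ p ∈ u.primeFactors, ¬ ∃ v : Fˣ, v ^ p = Units.mk0 w hw := by
  constructor
  · intro h p hp ⟨v, hv⟩
    have hpu : p ∣ u := Nat.dvd_of_mem_primeFactors hp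
    have : w = (v : F) ^ p := by
      have := congrArg (Units.val) hv
      rw [Units.val_pow_eq_pow_val] at this
      simpa using this.symm
    exact (Nat.prime_of_mem_primeFactors hp).ne_one (h (v : F) p hpu this)
  · intro h v d hd hvd
    by_contra hd1
    have hd0 : d ≠ 0 := by
      rintro rfl
      exact hu0 (Nat.zero_dvd.mp hd)
    obtain ⟨p, hp, hpd⟩ := Nat.exists_prime_and_dvd hd1
    have hv0 : v ≠ 0 := by
      rintro rfl
      rw [zero_pow hd0] at hvd
      exact hw hvd
    refine h p (Nat.mem_primeFactors.mpr ⟨hp, hpd.trans hd, hu0⟩) ?_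
    refine ⟨(Units.mk0 v hv0) ^ (d / p), ?_⟩
    ext
    push_cast
    rw [← pow_mul, Nat.div_mul_cancel hpd]
    exact hvd.symm

end Link


set_option maxHeartbeats 1000000 in
open Classical in
/-- Vinogradov-type characteristic function for the set of `u`-free elements. -/
theorem char_fun_ufree {q : ℕ} (F : Type*) [Field F] [Fintype F]
    (hF : Fintype.card F = q) (u : ℕ) (hu : u ∣ q - 1) (w : F) (hw : w ≠ 0) :
    ((Nat.totient u : ℂ) / (u : ℂ)) *
      ∑ d ∈ u.divisors, (((ArithmeticFunction.moebius d : ℤ) : ℂ) / (Nat.totient d : ℂ)) *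
        ∑ χ ∈ Finset.univ.filter (fun χ : MulChar F ℂ => orderOf χ = d), χ w
      = if IsEFree u w then 1 else 0 := by
  subst hF
  have hcard2 : 1 < Fintype.card F := Fintype.one_lt_card
  have hn0 : Fintype.card F - 1 ≠ 0 := by omega
  have hu0 : u ≠ 0 := by
    rintro rfl
    exact hn0 (Nat.zero_dvd.mp hu)
  set w' : Fˣ := Units.mk0 w hw with hw'
  have hwc : (w' : F) = w := rfl
  have hstep : ∀ d ∈ u.divisors,
      (((ArithmeticFunction.moebius d : ℤ) : ℂ) / (Nat.totient d : ℂ)) *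
        ∑ χ ∈ Finset.univ.filter (fun χ : MulChar F ℂ => orderOf χ = d), χ w
      = hfun w' d := by
    intro d hd
    rw [← hwc, charSum_eq_cfun w' ((Nat.dvd_of_mem_divisors hd).trans hu)
      (Nat.pos_of_mem_divisors hd).ne', hfun_apply]
  rw [Finset.sum_congr rfl hstep]
  rw [arith_eval w' hu0]
  have hiff : (∀ p ∈ u.primeFactors, ¬∃ v : Fˣ, v ^ p = w') ↔ IsEFree u w :=
    (efree_iff hu0 w hw).symm
  by_cases hE : IsEFree u w
  · rw [if_pos (hiff.mpr hE), if_pos hE]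
  · rw [if_neg (fun hA => hE (hiff.mp hA)), if_neg hE]
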